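/- Let R be a commutative ring, let A be an n×n matrix over R, and let h_1,…,h_n ∈ R. Then for every x ∈ R, det(x·I_n − (A + diag(h_1,…,h_n))) = Σ_{S ⊆ {1,…,n}} (∏_{i∈S} (−h_i)) · det of the principal submatrix of (x·I_n − A) obtained by deleting the rows and columns indexed by S (where the term for S = ∅ is det(x·I_n − A) and the term for S = {1,…,n} is 1). -/

import Mathlib

open Matrix BigOperators

lemma det_piecewise_single {R : Type*} [CommRing R] {n : ℕ}
    (M : Matrix (Fin n) (Fin n) R) (S : Finset (Fin n)) :
    (Matrix.of (S.piecewise (fun i => Pi.single i (1 : R)) M)).det =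
      (M.submatrix (fun i : {i : Fin n // i ∉ S} => (i : Fin n))
        (fun i : {i : Fin n // i ∉ S} => (i : Fin n))).det := by
  classical
  let e : {i : Fin n // i ∉ S} ⊕ {i : Fin n // ¬ i ∉ S} ≃ Fin n :=
    Equiv.sumCompl (· ∉ S)
  rw [← Matrix.det_submatrix_equiv_self e]
  have : (Matrix.of (S.piecewise (fun i => Pi.single i (1 : R)) M)).submatrix e e =
      Matrix.fromBlocks
        (M.submatrix (fun i : {i : Fin n // i ∉ S} => (i : Fin n))
          (fun i : {i : Fin n // i ∉ S} => (i : Fin n)))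
        ((Matrix.of (S.piecewise (fun i => Pi.single i (1 : R)) M)).submatrix
          (fun i : {i : Fin n // i ∉ S} => (i : Fin n))
          (fun j : {i : Fin n // ¬ i ∉ S} => (j : Fin n)))
        0 1 := by
    ext i j
    cases i with
    | inl i =>
      cases j with
      | inl j =>
        simp [e, Finset.piecewise, i.2]
      | inr j => simp [e]
    | inr i =>
      have hi : (i : Fin n) ∈ S := not_not.mp i.2
      cases j with
      | inl j =>
        have : (i : Fin n) ≠ (j : Fin n) := fun h => j.2 (h ▸ hi)
        simp [e, Finset.piecewise, hi, Pi.single_apply, this.symm]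
      | inr j =>
        simp only [e, Equiv.sumCompl_apply_inr, Matrix.submatrix_apply,
          Matrix.fromBlocks_apply₂₂, Matrix.of_apply,
          Finset.piecewise_eq_of_mem _ _ _ hi, Pi.single_apply, Matrix.one_apply]
        by_cases hij : (i : Fin n) = (j : Fin n)
        · simp [hij, Subtype.ext hij, Finset.piecewise, hi, not_not.mp j.2]
        · simp [Subtype.ext_iff, hij, Ne.symm hij, Finset.piecewise, hi]
  rw [this, Matrix.det_fromBlocks_zero₂₁, Matrix.det_one, mul_one]

lemma det_add_diagonal {R : Type*} [CommRing R] {n : ℕ}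
    (M : Matrix (Fin n) (Fin n) R) (d : Fin n → R) :
    (M + Matrix.diagonal d).det =
      ∑ S : Finset (Fin n), (∏ i ∈ S, d i) *
        (M.submatrix (fun i : {i : Fin n // i ∉ S} => (i : Fin n))
          (fun i : {i : Fin n // i ∉ S} => (i : Fin n))).det := by
  classical
  set f := (Matrix.detRowAlternating (R := R) (n := Fin n)).toMultilinearMap with hf
  have h1 : (M + Matrix.diagonal d).det =
      f (@HAdd.hAdd (Fin n → Fin n → R) (Fin n → Fin n → R) (Fin n → Fin n → R) _ (Matrix.diagonal d) M) := by
    rw [add_comm]; rfl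
  rw [h1]
  erw [f.map_add_univ]
  refine Finset.sum_congr rfl fun S _ => ?_
  have hrow : S.piecewise (Matrix.diagonal d) M =
      S.piecewise (fun i => d i • (S.piecewise (fun i => Pi.single i (1 : R)) M) i)
        (S.piecewise (fun i => Pi.single i (1 : R)) M) := by
    funext i
    by_cases hi : i ∈ S
    · erw [Finset.piecewise_eq_of_mem _ _ _ hi, Finset.piecewise_eq_of_mem _ _ _ hi,
        Finset.piecewise_eq_of_mem _ _ _ hi]
      funext j
      simp [Matrix.diagonal_apply, Pi.single_apply, eq_comm, mul_comm]
    · erw [Finset.piecewise_eq_of_notMem _ _ _ hi, Finset.piecewise_eq_of_notMem _ _ _ hi,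
        Finset.piecewise_eq_of_notMem _ _ _ hi]
  rw [show f (S.piecewise (Matrix.diagonal d) M) = f (S.piecewise
      (fun i => d i • (S.piecewise (fun i => Pi.single i (1 : R)) M) i)
      (S.piecewise (fun i => Pi.single i (1 : R)) M)) from congrArg f hrow,
    f.map_piecewise_smul d (S.piecewise (fun i => Pi.single i (1 : R)) M) S]
  rw [smul_eq_mul]
  congr 1
  exact det_piecewise_single M S

/-- For an `n×n` matrix `A` over a commutative ring `R`, elements
`h_1, …, h_n ∈ R` and `x ∈ R`,
`det(x·I − (A + diag h)) = Σ_{S ⊆ {1,…,n}} (∏_{i∈S} (−h_i)) · det((x·I − A)` restricted to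
the rows and columns not in `S)`. -/
theorem det_sub_add_diagonal_expansion {R : Type*} [CommRing R] {n : ℕ}
    (A : Matrix (Fin n) (Fin n) R) (h : Fin n → R) (x : R) :
    (x • (1 : Matrix (Fin n) (Fin n) R) - (A + Matrix.diagonal h)).det =
      ∑ S : Finset (Fin n), (∏ i ∈ S, (-h i)) *
        ((x • (1 : Matrix (Fin n) (Fin n) R) - A).submatrix
          (fun i : {i : Fin n // i ∉ S} => (i : Fin n))
          (fun i : {i : Fin n // i ∉ S} => (i : Fin n))).det := by
  have key : x • (1 : Matrix (Fin n) (Fin n) R) - (A + Matrix.diagonal h) =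
      (x • (1 : Matrix (Fin n) (Fin n) R) - A) + Matrix.diagonal (fun i => -h i) := by
    rw [← Matrix.diagonal_neg]
    abel
  rw [key, det_add_diagonal]
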